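/- Let X be a real random variable with E[exp(μX)] ≤ exp(μ²ε²/2) for all μ ∈ ℝ, for some ε > 0, and let ξ be a random variable on the same probability space with |ξ| ≤ 1 almost surely. Then for every positive integer k, |E[(e^X − E_k(X))·ξ]| ≤ (C_k / k!) ε^k e^{ε²}, where E_k(X) = ∑_{j=0}^{k−1} X^j / j! and C_k = √(2^{k+1} k!). In particular, |E[(e^X − 1 − X)ξ]| ≤ 2ε² e^{ε²} and |E[(e^X − 1 − X − X²/2)ξ]| ≤ (5/3)ε³ e^{ε²}. -/

import Mathlib

open MeasureTheory Finset Real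

private noncomputable def Ek (k : ℕ) (x : ℝ) : ℝ := ∑ j ∈ Finset.range k, x ^ j / j.factorial
private noncomputable def Rk (k : ℕ) (x : ℝ) : ℝ := Real.exp x - Ek k x

private lemma Ek_zero (k : ℕ) : Ek (k + 1) 0 = 1 := by
  unfold Ek
  rw [Finset.sum_eq_single 0]
  · simp
  · intro j hj hj0
    simp [zero_pow hj0]
  · simp

private lemma Rk_zero (k : ℕ) : Rk (k + 1) 0 = 0 := by
  simp [Rk, Ek_zero]

private lemma hasDerivAt_Ek (k : ℕ) (x : ℝ) : HasDerivAt (Ek (k + 1)) (Ek k x) x := by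
  have h : ∀ j : ℕ, HasDerivAt (fun y : ℝ => y ^ j / j.factorial)
      ((j : ℝ) * x ^ (j - 1) / j.factorial) x := by
    intro j
    simpa [div_eq_mul_inv] using (hasDerivAt_pow j x).div_const (j.factorial : ℝ)
  have hsum : HasDerivAt (Ek (k + 1))
      (∑ j ∈ Finset.range (k + 1), (j : ℝ) * x ^ (j - 1) / j.factorial) x := by
    unfold Ek
    exact HasDerivAt.fun_sum fun j _ => h j
  convert hsum using 1
  rw [Finset.sum_range_succ']
  simp only [Nat.cast_zero, zero_mul, Nat.factorial_zero, Nat.cast_one, zero_div, add_zero]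
  apply Finset.sum_congr rfl
  intro j _
  rw [Nat.factorial_succ]
  push_cast
  have hj : (j : ℝ) + 1 ≠ 0 := by positivity
  field_simp

private lemma hasDerivAt_Rk (k : ℕ) (x : ℝ) : HasDerivAt (Rk (k + 1)) (Rk k x) x :=
  (Real.hasDerivAt_exp x).sub (hasDerivAt_Ek k x)

/-- if f 0 = 0 and f' ≥ 0 on [0,∞), then f ≥ 0 on [0,∞) -/
private lemma nonneg_right (f f' : ℝ → ℝ) (hf : ∀ x, HasDerivAt f (f' x) x)
    (h0 : f 0 = 0) (hd : ∀ x, 0 ≤ x → 0 ≤ f' x) : ∀ x, 0 ≤ x → 0 ≤ f x := by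
  intro x hx
  have hmono : MonotoneOn f (Set.Ici 0) := by
    apply monotoneOn_of_deriv_nonneg (convex_Ici 0)
    · exact fun y _ => ((hf y).differentiableAt).continuousAt.continuousWithinAt
    · exact fun y _ => ((hf y).differentiableAt).differentiableWithinAt
    · intro y hy
      rw [interior_Ici] at hy
      rw [(hf y).deriv]
      exact hd y (le_of_lt hy)
  have := hmono (Set.self_mem_Ici) (Set.mem_Ici.2 hx) hx
  rwa [h0] at this

private lemma nonneg_left (f f' : ℝ → ℝ) (hf : ∀ x, HasDerivAt f (f' x) x)
    (h0 : f 0 = 0) (hd : ∀ x, x ≤ 0 → f' x ≤ 0) : ∀ x, x ≤ 0 → 0 ≤ f x := by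
  intro x hx
  have hmono : AntitoneOn f (Set.Iic 0) := by
    apply antitoneOn_of_deriv_nonpos (convex_Iic 0)
    · exact fun y _ => ((hf y).differentiableAt).continuousAt.continuousWithinAt
    · exact fun y _ => ((hf y).differentiableAt).differentiableWithinAt
    · intro y hy
      rw [interior_Iic] at hy
      rw [(hf y).deriv]
      exact hd y (le_of_lt hy)
  have := hmono (Set.mem_Iic.2 hx) (Set.self_mem_Iic) hx
  rwa [h0] at this

private lemma one_sub_mul_exp_le (x : ℝ) : (1 - x) * Real.exp x ≤ 1 := by
  have h2 : 1 - x ≤ Real.exp (-x) := by linarith [Real.add_one_le_exp (-x)]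
  calc (1 - x) * Real.exp x ≤ Real.exp (-x) * Real.exp x :=
        mul_le_mul_of_nonneg_right h2 (Real.exp_pos x).le
    _ = 1 := by rw [← Real.exp_add]; simp

private lemma Rk_nonneg_right : ∀ (k : ℕ) (x : ℝ), 0 ≤ x → 0 ≤ Rk k x := by
  intro k
  induction k with
  | zero => intro x _; simp [Rk, Ek]; positivity
  | succ n ih =>
    exact nonneg_right (Rk (n + 1)) (Rk n) (hasDerivAt_Rk n) (Rk_zero n) ih

private lemma Rk_nonneg_left : ∀ (k : ℕ) (x : ℝ), x ≤ 0 → 0 ≤ (-1) ^ k * Rk k x := by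
  intro k
  induction k with
  | zero => intro x _; simp [Rk, Ek]; positivity
  | succ n ih =>
    apply nonneg_left (fun x => (-1) ^ (n + 1) * Rk (n + 1) x)
      (fun x => -((-1) ^ n * Rk n x))
    · intro x
      have := ((hasDerivAt_Rk n x).const_mul ((-1 : ℝ) ^ (n + 1)))
      exact this.congr_deriv (by ring)
    · simp [Rk_zero]
    · intro x hx
      simpa using ih x hx

private lemma Rk_le_right : ∀ (k : ℕ) (x : ℝ), 0 ≤ x →
    ((k + 1).factorial : ℝ) * Rk k x ≤ x ^ k * (k + Real.exp x) := by
  intro k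
  induction k with
  | zero => intro x _; simp [Rk, Ek]
  | succ n ih =>
    have key : ∀ x : ℝ, 0 ≤ x →
        0 ≤ x ^ (n + 1) * ((n + 1) + Real.exp x) - ((n + 2).factorial : ℝ) * Rk (n + 1) x := by
      apply nonneg_right
        (fun x => x ^ (n + 1) * ((n + 1) + Real.exp x)
          - ((n + 2).factorial : ℝ) * Rk (n + 1) x)
        (fun x => ((n + 1) * x ^ n * ((n + 1) + Real.exp x) + x ^ n * x * Real.exp x)
          - ((n + 2).factorial : ℝ) * Rk n x)
      · intro x
        have h1 : HasDerivAt (fun y : ℝ => y ^ (n + 1) * ((n + 1) + Real.exp y))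
            ((n + 1) * x ^ n * ((n + 1) + Real.exp x) + x ^ (n + 1) * Real.exp x) x := by
          have := (hasDerivAt_pow (n + 1) x).mul ((Real.hasDerivAt_exp x).const_add ((n : ℝ) + 1))
          exact this.congr_deriv (by push_cast; ring)
        have h2 := (hasDerivAt_Rk n x).const_mul ((n + 2).factorial : ℝ)
        exact h1.sub h2
      · simp [Rk_zero]
      · intro x hx
        have hf : ((n + 2).factorial : ℝ) = (n + 2) * ((n + 1).factorial : ℝ) := by
          rw [Nat.factorial_succ]; push_cast; ring
        have h1 : ((n + 2).factorial : ℝ) * Rk n x ≤ (n + 2) * (x ^ n * (n + Real.exp x)) := by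
          rw [hf, mul_assoc]
          exact mul_le_mul_of_nonneg_left (ih x hx) (by positivity)
        have h2 : (0:ℝ) ≤ 1 - (1 - x) * Real.exp x := by linarith [one_sub_mul_exp_le x]
        have hmul : (0:ℝ) ≤ x ^ n * (1 - (1 - x) * Real.exp x) :=
          mul_nonneg (pow_nonneg hx n) h2
        nlinarith [hmul, h1]
    intro x hx
    have h := key x hx
    have e : n + 1 + 1 = n + 2 := rfl
    rw [e]
    push_cast
    push_cast at h
    linarith

private lemma Rk_le_left : ∀ (k : ℕ) (x : ℝ), x ≤ 0 →
    ((k + 1).factorial : ℝ) * ((-1) ^ k * Rk k x) ≤ (-x) ^ k * (k + Real.exp x) := by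
  intro k
  induction k with
  | zero => intro x _; simp [Rk, Ek]
  | succ n ih =>
    have key : ∀ x : ℝ, x ≤ 0 →
        0 ≤ (-x) ^ (n + 1) * ((n + 1) + Real.exp x)
          - ((n + 2).factorial : ℝ) * ((-1) ^ (n + 1) * Rk (n + 1) x) := by
      apply nonneg_left
        (fun x => (-x) ^ (n + 1) * ((n + 1) + Real.exp x)
          - ((n + 2).factorial : ℝ) * ((-1) ^ (n + 1) * Rk (n + 1) x))
        (fun x => (-((n + 1) * (-x) ^ n * ((n + 1) + Real.exp x)) + (-x) ^ n * (-x) * Real.exp x)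
          + ((n + 2).factorial : ℝ) * ((-1) ^ n * Rk n x))
      · intro x
        have hneg : HasDerivAt (fun y : ℝ => (-y) ^ (n + 1)) (((n + 1) * (-x) ^ n) * (-1)) x := by
          have := (hasDerivAt_pow (n + 1) (-x)).comp x (hasDerivAt_neg x)
          exact this.congr_deriv (by push_cast; ring)
        have h1 : HasDerivAt (fun y : ℝ => (-y) ^ (n + 1) * ((n + 1) + Real.exp y))
            ((((n + 1) * (-x) ^ n) * (-1)) * ((n + 1) + Real.exp x) + (-x) ^ (n + 1) * Real.exp x)
            x := hneg.mul ((Real.hasDerivAt_exp x).const_add ((n : ℝ) + 1))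
        have h2 := ((hasDerivAt_Rk n x).const_mul ((-1 : ℝ) ^ (n + 1))).const_mul
          ((n + 2).factorial : ℝ)
        exact (h1.sub h2).congr_deriv (by push_cast; ring)
      · simp [Rk_zero]
      · intro x hx
        have hf : ((n + 2).factorial : ℝ) = (n + 2) * ((n + 1).factorial : ℝ) := by
          rw [Nat.factorial_succ]; push_cast; ring
        have h1 : ((n + 2).factorial : ℝ) * ((-1) ^ n * Rk n x)
            ≤ (n + 2) * ((-x) ^ n * (n + Real.exp x)) := by
          rw [hf, mul_assoc]
          exact mul_le_mul_of_nonneg_left (ih x hx) (by positivity)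
        have h2 : (0:ℝ) ≤ 1 - (1 - x) * Real.exp x := by linarith [one_sub_mul_exp_le x]
        have hmul : (0:ℝ) ≤ (-x) ^ n * (1 - (1 - x) * Real.exp x) :=
          mul_nonneg (pow_nonneg (neg_nonneg.2 hx) n) h2
        nlinarith [hmul, h1]
    intro x hx
    have h := key x hx
    have e : n + 1 + 1 = n + 2 := rfl
    rw [e]
    push_cast
    push_cast at h
    linarith

private lemma abs_Rk_le (k : ℕ) (x : ℝ) :
    |Rk k x| ≤ |x| ^ k * (k + Real.exp x) / (k + 1).factorial := by
  have hfac : (0:ℝ) < ((k + 1).factorial : ℝ) := by positivity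
  rw [le_div_iff₀ hfac]
  rcases le_or_gt 0 x with hx | hx
  · rw [abs_of_nonneg (Rk_nonneg_right k x hx), abs_of_nonneg hx]
    have := Rk_le_right k x hx
    linarith [mul_comm (((k + 1).factorial : ℝ)) (Rk k x)]
  · have hx' : x ≤ 0 := hx.le
    have hnn := Rk_nonneg_left k x hx'
    have habs : |Rk k x| = (-1) ^ k * Rk k x := by
      have h := abs_of_nonneg hnn
      rwa [abs_mul, abs_pow, abs_neg, abs_one, one_pow, one_mul] at h
    rw [habs, abs_of_nonpos hx']
    have := Rk_le_left k x hx'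
    linarith [mul_comm (((k + 1).factorial : ℝ)) ((-1) ^ k * Rk k x)]

private lemma pow_le_factorial_mul_exp (n : ℕ) {x : ℝ} (hx : 0 ≤ x) :
    x ^ n ≤ n.factorial * Real.exp x := by
  have h0 : x ^ n / n.factorial ≤ Ek (n + 1) x :=
    Finset.single_le_sum (f := fun j => x ^ j / j.factorial)
      (fun j _ => by positivity) (Finset.self_mem_range_succ n)
  have h1 : Ek (n + 1) x ≤ Real.exp x := by
    have := Rk_nonneg_right (n + 1) x hx
    simp only [Rk] at this
    linarith
  have h2 : x ^ n / n.factorial ≤ Real.exp x := le_trans h0 h1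
  rw [div_le_iff₀ (by positivity)] at h2
  linarith [h2, mul_comm (Real.exp x) ((n.factorial : ℝ))]

private lemma abs_pow_le (n : ℕ) (x : ℝ) :
    |x| ^ n ≤ n.factorial * (Real.exp x + Real.exp (-x)) := by
  rcases abs_cases x with ⟨h, h2⟩ | ⟨h, h2⟩
  · rw [h]
    have := pow_le_factorial_mul_exp n h2
    nlinarith [Real.exp_pos (-x), (by positivity : (0:ℝ) < n.factorial)]
  · rw [h]
    have := pow_le_factorial_mul_exp n (neg_nonneg.2 h2.le)
    nlinarith [Real.exp_pos x, (by positivity : (0:ℝ) < n.factorial)]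

private lemma abs_pow_mul_exp_le (n : ℕ) (x : ℝ) :
    |x| ^ n * Real.exp x ≤ n.factorial * (Real.exp (2 * x) + 1) := by
  have hfac : (0:ℝ) < n.factorial := Nat.cast_pos.2 n.factorial_pos
  rcases le_or_gt 0 x with hx | hx
  · have h1 : |x| ^ n ≤ n.factorial * Real.exp x := by
      rw [abs_of_nonneg hx]; exact pow_le_factorial_mul_exp n hx
    have h2 : |x| ^ n * Real.exp x ≤ n.factorial * Real.exp x * Real.exp x :=
      mul_le_mul_of_nonneg_right h1 (Real.exp_pos x).le
    calc |x| ^ n * Real.exp x ≤ n.factorial * Real.exp x * Real.exp x := h2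
      _ = n.factorial * Real.exp (2 * x) := by
          rw [mul_assoc, ← Real.exp_add]; ring_nf
      _ ≤ n.factorial * (Real.exp (2 * x) + 1) := by nlinarith
  · have h1 : |x| ^ n ≤ n.factorial * Real.exp (-x) := by
      rw [abs_of_neg hx]
      simpa using pow_le_factorial_mul_exp n (neg_nonneg.2 hx.le)
    have h2 : |x| ^ n * Real.exp x ≤ n.factorial * Real.exp (-x) * Real.exp x :=
      mul_le_mul_of_nonneg_right h1 (Real.exp_pos x).le
    calc |x| ^ n * Real.exp x ≤ n.factorial * Real.exp (-x) * Real.exp x := h2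
      _ = n.factorial := by rw [mul_assoc, ← Real.exp_add]; simp
      _ ≤ n.factorial * (Real.exp (2 * x) + 1) := by nlinarith [Real.exp_pos (2 * x)]

private lemma gamma_integrable (k : ℕ) {r : ℝ} (hr : 0 < r) :
    MeasureTheory.IntegrableOn (fun t : ℝ => t ^ k * Real.exp (-(r * t))) (Set.Ioi 0) := by
  have hr2 : 0 < r / 2 := by positivity
  apply MeasureTheory.Integrable.mono'
    (g := fun t : ℝ => (k.factorial / (r / 2) ^ k) * Real.exp (-(r / 2) * t))
    ((exp_neg_integrableOn_Ioi 0 hr2).const_mul _)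
  · exact (Continuous.aestronglyMeasurable (by continuity))
  · filter_upwards [MeasureTheory.ae_restrict_mem measurableSet_Ioi] with t ht
    have ht0 : (0:ℝ) < t := ht
    have hp : ((r / 2) * t) ^ k ≤ k.factorial * Real.exp ((r / 2) * t) :=
      pow_le_factorial_mul_exp k (by positivity)
    have hpow : (r / 2) ^ k * t ^ k ≤ k.factorial * Real.exp ((r / 2) * t) := by
      rwa [mul_pow] at hp
    have key : t ^ k * Real.exp (-(r / 2) * t) ≤ k.factorial / (r / 2) ^ k := by
      have hrk : (0:ℝ) < (r / 2) ^ k := pow_pos hr2 k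
      rw [le_div_iff₀ hrk]
      have h3 : Real.exp (-(r / 2) * t) * Real.exp ((r / 2) * t) = 1 := by
        have he : -(r / 2) * t + r / 2 * t = 0 := by ring
        rw [← Real.exp_add, he, Real.exp_zero]
      have h4 := mul_le_mul_of_nonneg_right hpow (Real.exp_pos (-(r / 2) * t)).le
      nlinarith [h3, h4]
    have hnorm : ‖t ^ k * Real.exp (-(r * t))‖ = t ^ k * Real.exp (-(r * t)) := by
      rw [Real.norm_eq_abs, abs_of_nonneg (by positivity)]
    rw [hnorm]
    have hsplit : Real.exp (-(r * t)) = Real.exp (-(r / 2) * t) * Real.exp (-(r / 2) * t) := by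
      rw [← Real.exp_add]; ring_nf
    calc t ^ k * Real.exp (-(r * t))
        = (t ^ k * Real.exp (-(r / 2) * t)) * Real.exp (-(r / 2) * t) := by
          rw [hsplit]; ring
      _ ≤ (k.factorial / (r / 2) ^ k) * Real.exp (-(r / 2) * t) :=
          mul_le_mul_of_nonneg_right key (Real.exp_pos _).le


private lemma gamma_value (k : ℕ) (hk : 0 < k) {r : ℝ} (hr : 0 < r) :
    ∫ t in Set.Ioi (0:ℝ), t ^ (k - 1) * Real.exp (-(r * t))
      = (1 / r) ^ k * ((k - 1).factorial : ℝ) := by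
  have h := integral_rpow_mul_exp_neg_mul_Ioi (a := (k:ℝ)) (r := r) (by exact_mod_cast hk) hr
  have hgam : Real.Gamma (k : ℝ) = ((k - 1).factorial : ℝ) := by
    have := Real.Gamma_nat_eq_factorial (k - 1)
    rwa [show ((k - 1 : ℕ) : ℝ) + 1 = (k : ℝ) by
      have : (k - 1) + 1 = k := Nat.succ_pred_eq_of_pos hk
      exact_mod_cast congrArg (Nat.cast (R := ℝ)) this] at this
  have hcong : ∫ t in Set.Ioi (0:ℝ), t ^ (k - 1) * Real.exp (-(r * t))
      = ∫ t in Set.Ioi (0:ℝ), t ^ ((k:ℝ) - 1) * Real.exp (-(r * t)) := by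
    apply setIntegral_congr_fun measurableSet_Ioi
    intro t ht
    simp only
    rw [show ((k:ℝ) - 1) = ((k - 1 : ℕ) : ℝ) by rw [Nat.cast_sub hk]; ring,
      Real.rpow_natCast]
  rw [hcong, h, hgam]
  congr 1
  rw [← Real.rpow_natCast (1/r) k]

private lemma cauchy_schwarz {Ω : Type*} [MeasurableSpace Ω] (P : Measure Ω)
    [IsProbabilityMeasure P] {f g : Ω → ℝ} (hfnn : ∀ ω, 0 ≤ f ω) (hgnn : ∀ ω, 0 ≤ g ω)
    (hfm : AEStronglyMeasurable f P) (hgm : AEStronglyMeasurable g P)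
    (hf2 : Integrable (fun ω => f ω ^ 2) P) (hg2 : Integrable (fun ω => g ω ^ 2) P) :
    ∫ ω, f ω * g ω ∂P ≤ Real.sqrt (∫ ω, f ω ^ 2 ∂P) * Real.sqrt (∫ ω, g ω ^ 2 ∂P) := by
  have hpq : Real.HolderConjugate 2 2 := by
    rw [Real.holderConjugate_iff_eq_conjExponent (by norm_num)]; norm_num
  have h2 : ENNReal.ofReal (2:ℝ) = 2 := by norm_num
  have hmf : MemLp f (ENNReal.ofReal (2:ℝ)) P := by
    rw [h2]; exact (memLp_two_iff_integrable_sq hfm).2 hf2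
  have hmg : MemLp g (ENNReal.ofReal (2:ℝ)) P := by
    rw [h2]; exact (memLp_two_iff_integrable_sq hgm).2 hg2
  have h := integral_mul_le_Lp_mul_Lq_of_nonneg hpq (ae_of_all _ hfnn) (ae_of_all _ hgnn) hmf hmg
  have hrw : ∀ (h : Ω → ℝ), (∫ ω, h ω ^ (2:ℝ) ∂P) = ∫ ω, h ω ^ 2 ∂P := by
    intro h
    congr 1
    funext ω
    rw [show (2:ℝ) = ((2:ℕ):ℝ) by norm_num, Real.rpow_natCast]
  rw [hrw f, hrw g] at h
  calc ∫ ω, f ω * g ω ∂P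
      ≤ (∫ ω, f ω ^ 2 ∂P) ^ (1/2 : ℝ) * (∫ ω, g ω ^ 2 ∂P) ^ (1/2 : ℝ) := h
    _ = Real.sqrt (∫ ω, f ω ^ 2 ∂P) * Real.sqrt (∫ ω, g ω ^ 2 ∂P) := by
        rw [Real.sqrt_eq_rpow, Real.sqrt_eq_rpow]

private lemma chernoff {Ω : Type*} [MeasurableSpace Ω] (P : Measure Ω)
    [IsProbabilityMeasure P] (Y : Ω → ℝ) (ε : ℝ) (hε : 0 < ε)
    (hI : ∀ c : ℝ, Integrable (fun ω => Real.exp (c * Y ω)) P)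
    (hM : ∀ c : ℝ, ∫ ω, Real.exp (c * Y ω) ∂P ≤ Real.exp (c ^ 2 * ε ^ 2 / 2))
    (s : ℝ) (hs : 0 ≤ s) :
    (P {ω | s ≤ Y ω}).toReal ≤ Real.exp (-(s ^ 2 / (2 * ε ^ 2))) := by
  have hc : (0:ℝ) ≤ s / ε ^ 2 := by positivity
  have h := ProbabilityTheory.measure_ge_le_exp_mul_mgf (X := Y) (μ := P) s hc (hI _)
  have hmgf : ProbabilityTheory.mgf Y P (s / ε ^ 2) ≤ Real.exp ((s / ε ^ 2) ^ 2 * ε ^ 2 / 2) :=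
    hM _
  calc (P {ω | s ≤ Y ω}).toReal
      ≤ Real.exp (-(s / ε ^ 2) * s) * ProbabilityTheory.mgf Y P (s / ε ^ 2) := h
    _ ≤ Real.exp (-(s / ε ^ 2) * s) * Real.exp ((s / ε ^ 2) ^ 2 * ε ^ 2 / 2) :=
        mul_le_mul_of_nonneg_left hmgf (Real.exp_pos _).le
    _ = Real.exp (-(s ^ 2 / (2 * ε ^ 2))) := by
        rw [← Real.exp_add]
        congr 1
        field_simp
        ring

private lemma moment_bound {Ω : Type*} [MeasurableSpace Ω] (P : Measure Ω)
    [IsProbabilityMeasure P] (X : Ω → ℝ) (ε : ℝ) (hε : 0 < ε) (hX : AEMeasurable X P)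
    (hint : ∀ μ : ℝ, Integrable (fun ω => Real.exp (μ * X ω)) P)
    (hmgf : ∀ μ : ℝ, ∫ ω, Real.exp (μ * X ω) ∂P ≤ Real.exp (μ ^ 2 * ε ^ 2 / 2))
    (k : ℕ) (hk : 0 < k) (hint2k : Integrable (fun ω => (X ω ^ 2) ^ k) P) :
    ∫ ω, (X ω ^ 2) ^ k ∂P ≤ 2 ^ (k + 1) * k.factorial * (ε ^ 2) ^ k := by
  set r : ℝ := 1 / (2 * ε ^ 2) with hr_def
  have hr : 0 < r := by positivity
  -- Chernoff for X and -X
  have hcherX := chernoff P X ε hε hint hmgf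
  have hIneg : ∀ c : ℝ, Integrable (fun ω => Real.exp (c * (-X) ω)) P := by
    intro c
    have hfun : (fun ω => Real.exp ((-c) * X ω)) = fun ω => Real.exp (c * (-X) ω) := by
      funext ω; simp only [Pi.neg_apply]; congr 1; ring
    exact hfun ▸ hint (-c)
  have hMneg : ∀ c : ℝ, ∫ ω, Real.exp (c * (-X) ω) ∂P ≤ Real.exp (c ^ 2 * ε ^ 2 / 2) := by
    intro c
    have hfun : (fun ω => Real.exp ((-c) * X ω)) = fun ω => Real.exp (c * (-X) ω) := by
      funext ω; simp only [Pi.neg_apply]; congr 1; ring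
    have := hmgf (-c)
    rw [hfun] at this
    simpa [neg_pow] using this
  have hcherneg := chernoff P (-X) ε hε hIneg hMneg
  -- tail bound for X²
  have htail : ∀ t : ℝ, 0 < t →
      P {a | t ≤ X a ^ 2} ≤ ENNReal.ofReal (2 * Real.exp (-(r * t))) := by
    intro t ht
    rw [ENNReal.le_ofReal_iff_toReal_le (measure_ne_top _ _) (by positivity)]
    have hsub : {a | t ≤ X a ^ 2} ⊆ {a | Real.sqrt t ≤ X a} ∪ {a | Real.sqrt t ≤ (-X) a} := by
      intro a ha
      have h1 : Real.sqrt t ≤ |X a| := by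
        rw [← Real.sqrt_sq_eq_abs]
        exact Real.sqrt_le_sqrt ha
      rcases abs_cases (X a) with ⟨he, _⟩ | ⟨he, _⟩
      · left; rwa [he] at h1
      · right; rw [Set.mem_setOf_eq, Pi.neg_apply]; rwa [he] at h1
    have h1 : P {a | t ≤ X a ^ 2}
        ≤ P {a | Real.sqrt t ≤ X a} + P {a | Real.sqrt t ≤ (-X) a} :=
      (measure_mono hsub).trans (measure_union_le _ _)
    have h2 : (P {a | t ≤ X a ^ 2}).toReal
        ≤ (P {a | Real.sqrt t ≤ X a}).toReal + (P {a | Real.sqrt t ≤ (-X) a}).toReal := by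
      calc (P {a | t ≤ X a ^ 2}).toReal
          ≤ (P {a | Real.sqrt t ≤ X a} + P {a | Real.sqrt t ≤ (-X) a}).toReal :=
            ENNReal.toReal_mono (by finiteness) h1
        _ = _ := ENNReal.toReal_add (measure_ne_top _ _) (measure_ne_top _ _)
    have hs : 0 ≤ Real.sqrt t := Real.sqrt_nonneg t
    have e1 := hcherX (Real.sqrt t) hs
    have e2 := hcherneg (Real.sqrt t) hs
    have hsq : Real.sqrt t ^ 2 = t := Real.sq_sqrt ht.le
    rw [hsq] at e1 e2
    have hexp : -(t / (2 * ε ^ 2)) = -(r * t) := by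
      rw [hr_def]; field_simp
    rw [hexp] at e1 e2
    linarith
  -- layer cake
  have hlayer := lintegral_comp_eq_lintegral_meas_le_mul P
    (f := fun ω => X ω ^ 2) (g := fun t => (k : ℝ) * t ^ (k - 1))
    (ae_of_all _ fun ω => sq_nonneg _) (hX.pow_const 2)
    (fun t _ => (Continuous.intervalIntegrable (by continuity) 0 t))
    ((ae_restrict_mem measurableSet_Ioi).mono fun t ht => by
      have h0t : (0:ℝ) < t := ht
      positivity)
  have hG : ∀ y : ℝ, (∫ t in (0:ℝ)..y, (k : ℝ) * t ^ (k - 1)) = y ^ k := by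
    intro y
    rw [intervalIntegral.integral_const_mul, integral_pow]
    have hkk : k - 1 + 1 = k := Nat.succ_pred_eq_of_pos hk
    rw [hkk, zero_pow hk.ne']
    have hc : ((k - 1 : ℕ) : ℝ) + 1 = (k : ℝ) := by rw [Nat.cast_sub hk]; ring
    rw [hc]
    field_simp
    simp
  have hLHS : ∫⁻ ω, ENNReal.ofReal (∫ t in (0:ℝ)..((fun ω => X ω ^ 2) ω), (k : ℝ) * t ^ (k - 1)) ∂P
      = ENNReal.ofReal (∫ ω, (X ω ^ 2) ^ k ∂P) := by
    rw [ofReal_integral_eq_lintegral_ofReal hint2k (ae_of_all _ fun ω => by positivity)]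
    apply lintegral_congr
    intro ω
    rw [hG]
  -- bound RHS
  have hbig : IntegrableOn (fun t : ℝ => 2 * Real.exp (-(r * t)) * ((k : ℝ) * t ^ (k - 1)))
      (Set.Ioi 0) := by
    have h0 := (gamma_integrable (k - 1) hr).const_mul (2 * (k : ℝ))
    apply h0.congr
    apply Filter.EventuallyEq.of_eq
    funext t
    ring
  have hRHS : ∫⁻ t in Set.Ioi (0:ℝ), P {a | t ≤ X a ^ 2} * ENNReal.ofReal ((k : ℝ) * t ^ (k - 1))
      ≤ ENNReal.ofReal (∫ t in Set.Ioi (0:ℝ), 2 * Real.exp (-(r * t)) * ((k : ℝ) * t ^ (k - 1))) := by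
    rw [ofReal_integral_eq_lintegral_ofReal hbig
      ((ae_restrict_mem measurableSet_Ioi).mono fun t ht => by
        have h0t : (0:ℝ) < t := ht
        positivity)]
    apply setLIntegral_mono
    · exact ENNReal.measurable_ofReal.comp
        ((by continuity : Continuous fun t : ℝ =>
          2 * Real.exp (-(r * t)) * ((k : ℝ) * t ^ (k - 1)))).measurable
    · intro t ht
      rw [ENNReal.ofReal_mul (by positivity : (0:ℝ) ≤ 2 * Real.exp (-(r * t)))]
      exact mul_le_mul_left (htail t ht) _
  -- compute the gamma integral
  have hval : ∫ t in Set.Ioi (0:ℝ), 2 * Real.exp (-(r * t)) * ((k : ℝ) * t ^ (k - 1))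
      = 2 ^ (k + 1) * k.factorial * (ε ^ 2) ^ k := by
    have hfun : (fun t : ℝ => 2 * Real.exp (-(r * t)) * ((k : ℝ) * t ^ (k - 1)))
        = fun t : ℝ => (2 * (k : ℝ)) * (t ^ (k - 1) * Real.exp (-(r * t))) := by
      funext t; ring
    rw [hfun, integral_const_mul, gamma_value k hk hr]
    have h1r : (1 : ℝ) / r = 2 * ε ^ 2 := by
      rw [hr_def]; field_simp
    rw [h1r]
    have hfact : (k : ℝ) * ((k - 1).factorial : ℝ) = (k.factorial : ℝ) := by
      exact_mod_cast congrArg (Nat.cast (R := ℝ)) (Nat.mul_factorial_pred hk.ne')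
    rw [mul_pow, pow_succ]
    linear_combination 2 * 2 ^ k * (ε ^ 2) ^ k * hfact
  -- combine
  have hchain : ENNReal.ofReal (∫ ω, (X ω ^ 2) ^ k ∂P)
      ≤ ENNReal.ofReal (2 ^ (k + 1) * k.factorial * (ε ^ 2) ^ k) := by
    rw [← hval]
    rw [← hLHS, hlayer]
    exact hRHS
  exact (ENNReal.ofReal_le_ofReal_iff (by positivity)).1 hchain

/-- If `X` satisfies `E[exp(μX)] ≤ exp(μ²ε²/2)` for all real `μ`
(`ε > 0`) and `|ξ| ≤ 1` a.s., then for every positive integer `k`, with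
`E_k(X) = ∑_{j<k} X^j/j!` and `C_k = √(2^{k+1} k!)`,
`|E[(e^X − E_k(X))ξ]| ≤ (C_k/k!) ε^k e^{ε²}`.  In particular
`|E[(e^X − 1 − X)ξ]| ≤ 2ε² e^{ε²}` and
`|E[(e^X − 1 − X − X²/2)ξ]| ≤ (5/3)ε³ e^{ε²}`. -/
theorem exp_taylor_remainder_bounded_weight
    {Ω : Type*} [MeasurableSpace Ω] (P : Measure Ω) [IsProbabilityMeasure P]
    (X : Ω → ℝ) (ε : ℝ) (hε : 0 < ε)
    (hint : ∀ μ : ℝ, Integrable (fun ω => Real.exp (μ * X ω)) P)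
    (hmgf : ∀ μ : ℝ, ∫ ω, Real.exp (μ * X ω) ∂P ≤ Real.exp (μ ^ 2 * ε ^ 2 / 2))
    (ξ : Ω → ℝ) (hξm : AEStronglyMeasurable ξ P) (hξ : ∀ᵐ ω ∂P, |ξ ω| ≤ 1) :
    (∀ k : ℕ, 0 < k →
      |∫ ω, (Real.exp (X ω) - ∑ j ∈ Finset.range k, X ω ^ j / j.factorial) * ξ ω ∂P|
        ≤ Real.sqrt (2 ^ (k + 1) * k.factorial) / k.factorial
            * ε ^ k * Real.exp (ε ^ 2)) ∧
    |∫ ω, (Real.exp (X ω) - 1 - X ω) * ξ ω ∂P|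
      ≤ 2 * ε ^ 2 * Real.exp (ε ^ 2) ∧
    |∫ ω, (Real.exp (X ω) - 1 - X ω - X ω ^ 2 / 2) * ξ ω ∂P|
      ≤ 5 / 3 * ε ^ 3 * Real.exp (ε ^ 2) := by
  -- measurability of X
  have hX : AEMeasurable X P := by
    have h1 : AEMeasurable (fun ω => Real.exp (1 * X ω)) P :=
      (hint 1).aestronglyMeasurable.aemeasurable
    have h2 : AEMeasurable (fun ω => Real.log (Real.exp (1 * X ω))) P :=
      Real.measurable_log.comp_aemeasurable h1
    refine h2.congr (Filter.Eventually.of_forall fun ω => ?_)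
    simp [Real.log_exp]
  have hξme : AEMeasurable ξ P := hξm.aemeasurable
  -- integrability of powers
  have hIpow : ∀ n : ℕ, Integrable (fun ω => |X ω| ^ n) P := by
    intro n
    apply Integrable.mono' (((hint 1).add (hint (-1))).const_mul (n.factorial : ℝ))
    · exact ((measurable_abs.comp_aemeasurable hX).pow_const n).aestronglyMeasurable
    · refine Filter.Eventually.of_forall fun ω => ?_
      have h := abs_pow_le n (X ω)
      rw [Real.norm_eq_abs, abs_of_nonneg (by positivity : (0:ℝ) ≤ |X ω| ^ n)]
      simpa using h
  -- the general statement
  have main : ∀ k : ℕ, 0 < k →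
      |∫ ω, (Real.exp (X ω) - ∑ j ∈ Finset.range k, X ω ^ j / j.factorial) * ξ ω ∂P|
        ≤ Real.sqrt (2 ^ (k + 1) * k.factorial) / k.factorial
            * ε ^ k * Real.exp (ε ^ 2) := by
    intro k hk
    set M : ℝ := Real.sqrt (2 ^ (k + 1) * k.factorial) * ε ^ k with hM_def
    set E : ℝ := Real.exp (ε ^ 2) with hE_def
    have hE1 : 1 ≤ E := by
      rw [hE_def, ← Real.exp_zero]
      exact Real.exp_le_exp.2 (by positivity)
    have hM0 : 0 ≤ M := by positivity
    -- integrability facts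
    have hIpk : Integrable (fun ω => |X ω| ^ k * Real.exp (X ω)) P := by
      apply Integrable.mono' (((hint 2).add (hint 0)).const_mul (k.factorial : ℝ))
      · exact (((measurable_abs.comp_aemeasurable hX).pow_const k).mul
          (Real.measurable_exp.comp_aemeasurable hX)).aestronglyMeasurable
      · refine Filter.Eventually.of_forall fun ω => ?_
        have h := abs_pow_mul_exp_le k (X ω)
        rw [Real.norm_eq_abs,
          abs_of_nonneg (by positivity : (0:ℝ) ≤ |X ω| ^ k * Real.exp (X ω))]
        simpa using h
    have hIsq : Integrable (fun ω => (|X ω| ^ k) ^ 2) P := by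
      have h := hIpow (k * 2)
      apply h.congr
      refine Filter.Eventually.of_forall fun ω => ?_
      simp [pow_mul]
    have hIexp2 : Integrable (fun ω => Real.exp (X ω) ^ 2) P := by
      apply (hint 2).congr
      refine Filter.Eventually.of_forall fun ω => ?_
      show Real.exp (2 * X ω) = Real.exp (X ω) ^ 2
      rw [sq, ← Real.exp_add]
      ring_nf
    have hI2k : Integrable (fun ω => (X ω ^ 2) ^ k) P := by
      have h := hIpow (2 * k)
      apply h.congr
      refine Filter.Eventually.of_forall fun ω => ?_
      show |X ω| ^ (2 * k) = (X ω ^ 2) ^ k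
      rw [pow_mul, sq_abs]
    -- moment bound
    have hmomk := moment_bound P X ε hε hX hint hmgf k hk hI2k
    have hsq_eq : ∫ ω, (|X ω| ^ k) ^ 2 ∂P = ∫ ω, (X ω ^ 2) ^ k ∂P := by
      apply integral_congr_ae
      refine Filter.Eventually.of_forall fun ω => ?_
      show (|X ω| ^ k) ^ 2 = (X ω ^ 2) ^ k
      rw [← pow_mul, mul_comm k 2, pow_mul, sq_abs]
    have hMbound : Real.sqrt (∫ ω, (|X ω| ^ k) ^ 2 ∂P) ≤ M := by
      rw [hM_def]
      have h1 : ∫ ω, (|X ω| ^ k) ^ 2 ∂P ≤ 2 ^ (k + 1) * k.factorial * (ε ^ 2) ^ k := by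
        rw [hsq_eq]; exact hmomk
      calc Real.sqrt (∫ ω, (|X ω| ^ k) ^ 2 ∂P)
          ≤ Real.sqrt (2 ^ (k + 1) * k.factorial * (ε ^ 2) ^ k) := Real.sqrt_le_sqrt h1
        _ = Real.sqrt (2 ^ (k + 1) * k.factorial) * ε ^ k := by
            rw [show ((ε ^ 2) ^ k : ℝ) = (ε ^ k) ^ 2 by ring,
              Real.sqrt_mul (by positivity), Real.sqrt_sq (by positivity)]
    have hEbound : Real.sqrt (∫ ω, Real.exp (X ω) ^ 2 ∂P) ≤ E := by
      have h1 : ∫ ω, Real.exp (X ω) ^ 2 ∂P ≤ Real.exp (2 * ε ^ 2) := by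
        have h2 := hmgf 2
        have h3 : ∫ ω, Real.exp (X ω) ^ 2 ∂P = ∫ ω, Real.exp (2 * X ω) ∂P := by
          apply integral_congr_ae
          refine Filter.Eventually.of_forall fun ω => ?_
          show Real.exp (X ω) ^ 2 = Real.exp (2 * X ω)
          rw [sq, ← Real.exp_add]
          ring_nf
        rw [h3]
        calc ∫ ω, Real.exp (2 * X ω) ∂P ≤ Real.exp ((2:ℝ) ^ 2 * ε ^ 2 / 2) := h2
          _ = Real.exp (2 * ε ^ 2) := by
              rw [show (2:ℝ) ^ 2 * ε ^ 2 / 2 = 2 * ε ^ 2 by ring]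
      calc Real.sqrt (∫ ω, Real.exp (X ω) ^ 2 ∂P)
          ≤ Real.sqrt (Real.exp (2 * ε ^ 2)) := Real.sqrt_le_sqrt h1
        _ = E := by
            rw [hE_def, show (2:ℝ) * ε ^ 2 = ε ^ 2 + ε ^ 2 by ring, Real.exp_add, ← sq,
              Real.sqrt_sq (Real.exp_nonneg _)]
    -- Cauchy–Schwarz
    have hcs1 : ∫ ω, |X ω| ^ k * Real.exp (X ω) ∂P ≤ M * E := by
      have h := cauchy_schwarz P (f := fun ω => |X ω| ^ k) (g := fun ω => Real.exp (X ω))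
        (fun ω => by positivity) (fun ω => (Real.exp_pos _).le)
        ((measurable_abs.comp_aemeasurable hX).pow_const k).aestronglyMeasurable
        (Real.measurable_exp.comp_aemeasurable hX).aestronglyMeasurable hIsq hIexp2
      exact h.trans (mul_le_mul hMbound hEbound (Real.sqrt_nonneg _) hM0)
    have hcs2 : ∫ ω, |X ω| ^ k ∂P ≤ M := by
      have h := cauchy_schwarz P (f := fun ω => |X ω| ^ k) (g := fun _ => (1:ℝ))
        (fun ω => by positivity) (fun ω => zero_le_one)
        ((measurable_abs.comp_aemeasurable hX).pow_const k).aestronglyMeasurable aestronglyMeasurable_const hIsq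
        (by simpa using (integrable_const (1:ℝ)))
      simp only [mul_one, one_pow] at h
      rw [integral_const, probReal_univ] at h
      simp only [ENNReal.toReal_one, smul_eq_mul, one_mul, Real.sqrt_one, mul_one] at h
      exact h.trans hMbound
    -- the dominating function
    have hIg : Integrable
        (fun ω => ((k:ℝ) * |X ω| ^ k + |X ω| ^ k * Real.exp (X ω)) / (k + 1).factorial) P :=
      (((hIpow k).const_mul (k:ℝ)).add hIpk).div_const _
    have hContRk : Continuous (Rk k) := by
      unfold Rk Ek
      exact Real.continuous_exp.sub
        (continuous_finset_sum _ fun j _ => (continuous_pow j).div_const _)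
    have hIprod : Integrable (fun ω => Rk k (X ω) * ξ ω) P := by
      apply Integrable.mono' hIg
      · exact ((hContRk.measurable.comp_aemeasurable hX).mul hξme).aestronglyMeasurable
      · filter_upwards [hξ] with ω hω
        have h1 := abs_Rk_le k (X ω)
        have h2 : ‖Rk k (X ω) * ξ ω‖ = |Rk k (X ω)| * |ξ ω| := by
          rw [Real.norm_eq_abs, abs_mul]
        rw [h2]
        have h3 : |Rk k (X ω)| * |ξ ω| ≤ |Rk k (X ω)| * 1 :=
          mul_le_mul_of_nonneg_left hω (abs_nonneg _)
        rw [mul_one] at h3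
        refine h3.trans (h1.trans (le_of_eq ?_))
        field_simp
    have habs_bound : ∀ᵐ ω ∂P, |Rk k (X ω) * ξ ω|
        ≤ ((k:ℝ) * |X ω| ^ k + |X ω| ^ k * Real.exp (X ω)) / (k + 1).factorial := by
      filter_upwards [hξ] with ω hω
      have h1 := abs_Rk_le k (X ω)
      rw [abs_mul]
      have h3 : |Rk k (X ω)| * |ξ ω| ≤ |Rk k (X ω)| * 1 :=
        mul_le_mul_of_nonneg_left hω (abs_nonneg _)
      rw [mul_one] at h3
      refine h3.trans (h1.trans (le_of_eq ?_))
      field_simp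
    -- final chain
    have hfacpos : (0:ℝ) < ((k + 1).factorial : ℝ) := by positivity
    have hkfac : ((k + 1).factorial : ℝ) = (k + 1) * (k.factorial : ℝ) := by
      rw [Nat.factorial_succ]; push_cast; ring
    have hchain : |∫ ω, Rk k (X ω) * ξ ω ∂P| ≤ M * E / k.factorial := by
      calc |∫ ω, Rk k (X ω) * ξ ω ∂P|
          ≤ ∫ ω, |Rk k (X ω) * ξ ω| ∂P := by
            have h0 := norm_integral_le_integral_norm (f := fun ω => Rk k (X ω) * ξ ω) (μ := P)
            simp only [Real.norm_eq_abs] at h0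
            exact h0
        _ ≤ ∫ ω, ((k:ℝ) * |X ω| ^ k + |X ω| ^ k * Real.exp (X ω)) / (k + 1).factorial ∂P :=
            integral_mono_ae hIprod.abs hIg habs_bound
        _ = ((k:ℝ) * ∫ ω, |X ω| ^ k ∂P + ∫ ω, |X ω| ^ k * Real.exp (X ω) ∂P)
              / (k + 1).factorial := by
            rw [integral_div, integral_add ((hIpow k).const_mul (k:ℝ)) hIpk, integral_const_mul]
        _ ≤ ((k:ℝ) * M + M * E) / (k + 1).factorial := by
            gcongr
        _ ≤ M * E / k.factorial := by
            rw [hkfac]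
            rw [div_le_div_iff₀ (by positivity) (by positivity)]
            have hkM : 0 ≤ (k:ℝ) * M := by positivity
            have : (k:ℝ) * M + M * E ≤ ((k:ℝ) + 1) * (M * E) := by nlinarith
            nlinarith [this, (by positivity : (0:ℝ) < (k.factorial : ℝ))]
    have heq : (fun ω => (Real.exp (X ω) - ∑ j ∈ Finset.range k, X ω ^ j / j.factorial) * ξ ω)
        = fun ω => Rk k (X ω) * ξ ω := rfl
    rw [heq]
    calc |∫ ω, Rk k (X ω) * ξ ω ∂P| ≤ M * E / k.factorial := hchain
      _ = Real.sqrt (2 ^ (k + 1) * k.factorial) / k.factorial * ε ^ k * Real.exp (ε ^ 2) := by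
          rw [hM_def, hE_def]
          ring
  refine ⟨main, ?_, ?_⟩
  · have h := main 2 (by norm_num)
    have hfun : (fun ω => (Real.exp (X ω) - 1 - X ω) * ξ ω)
        = fun ω => (Real.exp (X ω) - ∑ j ∈ Finset.range 2, X ω ^ j / j.factorial) * ξ ω := by
      funext ω
      congr 1
      rw [Finset.sum_range_succ, Finset.sum_range_one]
      norm_num
      ring
    rw [hfun]
    refine h.trans (le_of_eq ?_)
    have h16 : ((2:ℝ) ^ (2 + 1) * (2:ℕ).factorial : ℝ) = 16 := by
      norm_num [Nat.factorial]
    rw [h16, show (16:ℝ) = 4 ^ 2 by norm_num, Real.sqrt_sq (by norm_num : (0:ℝ) ≤ 4)]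
    norm_num [Nat.factorial]
  · have h := main 3 (by norm_num)
    have hfun : (fun ω => (Real.exp (X ω) - 1 - X ω - X ω ^ 2 / 2) * ξ ω)
        = fun ω => (Real.exp (X ω) - ∑ j ∈ Finset.range 3, X ω ^ j / j.factorial) * ξ ω := by
      funext ω
      congr 1
      rw [Finset.sum_range_succ, Finset.sum_range_succ, Finset.sum_range_one]
      norm_num [Nat.factorial]
      ring
    rw [hfun]
    refine h.trans ?_
    have h96 : ((2:ℝ) ^ (3 + 1) * (3:ℕ).factorial : ℝ) = 96 := by
      norm_num [Nat.factorial]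
    rw [h96]
    have hsqrt : Real.sqrt 96 ≤ 10 := by
      rw [show (10:ℝ) = Real.sqrt (10 ^ 2) from (Real.sqrt_sq (by norm_num)).symm]
      apply Real.sqrt_le_sqrt
      norm_num
    have hfac3 : ((3:ℕ).factorial : ℝ) = 6 := by norm_num [Nat.factorial]
    rw [hfac3]
    have hc : Real.sqrt 96 / 6 ≤ 5 / 3 := by
      rw [div_le_div_iff₀ (by norm_num) (by norm_num)]
      nlinarith [hsqrt]
    have hpos : (0:ℝ) ≤ ε ^ 3 * Real.exp (ε ^ 2) := by positivity
    calc Real.sqrt 96 / 6 * ε ^ 3 * Real.exp (ε ^ 2)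
        = Real.sqrt 96 / 6 * (ε ^ 3 * Real.exp (ε ^ 2)) := by ring
      _ ≤ 5 / 3 * (ε ^ 3 * Real.exp (ε ^ 2)) := mul_le_mul_of_nonneg_right hc hpos
      _ = 5 / 3 * ε ^ 3 * Real.exp (ε ^ 2) := by ring
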